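/- Descent property of exact PMD (value level): If for every state s, π_s^{t+1} minimizes −η^t⟨Q_s^{π^t}, π_s⟩ + D_h(π_s, π_s^t) over the simplex with η^t > 0, then Q_s^{π^{t+1}} ≥ Q_s^{π^t} componentwise for all s, and V_ρ^{π^{t+1}} ≥ V_ρ^{π^t} for every initial distribution ρ. -/

import Mathlib

open Finset

/-- The probability simplex over a finite action set. -/
def simplex (A : Type*) [Fintype A] : Set (A → ℝ) :=
  {p | (∀ a, 0 ≤ p a) ∧ ∑ a, p a = 1}

/-- The continuous linear functional `p ↦ ∑ a, v a * p a`. -/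
noncomputable def dotCLM {A : Type*} [Fintype A] (v : A → ℝ) : (A → ℝ) →L[ℝ] ℝ :=
  ∑ a, v a • (ContinuousLinearMap.proj a : (A → ℝ) →L[ℝ] ℝ)

/-- Bregman divergence generated by `h` with gradient map `g`. -/
noncomputable def breg {A : Type*} [Fintype A]
    (h : (A → ℝ) → ℝ) (g : (A → ℝ) → (A → ℝ)) (p q : A → ℝ) : ℝ :=
  h p - h q - ∑ a, g q a * (p a - q a)

lemma dotCLM_apply {A : Type*} [Fintype A] (v x : A → ℝ) : dotCLM v x = ∑ a, v a * x a := by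
  simp [dotCLM, ContinuousLinearMap.sum_apply]

lemma breg_nonneg {A : Type*} [Fintype A] {h : (A → ℝ) → ℝ} {g : (A → ℝ) → (A → ℝ)}
    (hconv : ConvexOn ℝ (simplex A) h)
    (hder : ∀ q ∈ simplex A, HasFDerivAt h (dotCLM (g q)) q)
    {p q : A → ℝ} (hp : p ∈ simplex A) (hq : q ∈ simplex A) :
    0 ≤ breg h g p q := by
  set L : ℝ →ᵃ[ℝ] (A → ℝ) := AffineMap.lineMap q p with hL
  have hφ : ConvexOn ℝ (L ⁻¹' simplex A) (h ∘ L) := hconv.comp_affineMap L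
  have h0 : (0 : ℝ) ∈ L ⁻¹' simplex A := by
    simpa [hL, AffineMap.lineMap_apply] using hq
  have h1 : (1 : ℝ) ∈ L ⁻¹' simplex A := by
    simpa [hL, AffineMap.lineMap_apply] using hp
  have hline : HasDerivAt (fun t : ℝ => L t) (p - q) 0 := by
    simp only [hL, AffineMap.lineMap_apply]
    simpa using ((hasDerivAt_id (0:ℝ)).smul_const (p - q)).add_const q
  have hd : HasDerivAt (h ∘ L) (dotCLM (g q) (p - q)) 0 := by
    have hL0 : L 0 = q := by simp [hL, AffineMap.lineMap_apply]
    have hder' : HasFDerivAt h (dotCLM (g q)) (L 0) := hL0 ▸ (hder q hq)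
    simpa using hder'.comp_hasDerivAt (0:ℝ) hline
  have hslope := hφ.le_slope_of_hasDerivAt h0 h1 zero_lt_one hd
  have : dotCLM (g q) (p - q) ≤ h p - h q := by
    simpa [slope_def_field, hL, AffineMap.lineMap_apply] using hslope
  rw [dotCLM_apply] at this
  simp only [breg]
  have : ∑ a, g q a * (p a - q a) ≤ h p - h q := by
    simpa using this
  linarith


/-- **Descent property of exact PMD (value level).** If for every state `s`,
`π^{t+1}_s` minimizes `−η^t⟨Q_s^{π^t}, ·⟩ + D_h(·, π_s^t)` over the simplex with
`η^t > 0`, then `Q^{π^{t+1}} ≥ Q^{π^t}` componentwise and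
`V_ρ^{π^{t+1}} ≥ V_ρ^{π^t}` for every initial distribution `ρ`. -/
theorem pmd_descent_value_level
    {S A : Type*} [Fintype S] [Fintype A]
    (γ : ℝ) (hγ0 : 0 ≤ γ) (hγ1 : γ < 1)
    (r : S → A → ℝ) (P : S → A → S → ℝ)
    (hP0 : ∀ s a s', 0 ≤ P s a s') (hP1 : ∀ s a, ∑ s', P s a s' = 1)
    (h : (A → ℝ) → ℝ) (g : (A → ℝ) → (A → ℝ))
    (hder : ∀ q ∈ simplex A, HasFDerivAt h (dotCLM (g q)) q)
    (hconv : StrictConvexOn ℝ (simplex A) h)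
    (πt πnext : S → A → ℝ)
    (hπt : ∀ s, πt s ∈ simplex A)
    (Q : S → A → ℝ) (V : S → ℝ)
    (hV : ∀ s, V s = ∑ a, πt s a * Q s a)
    (hQ : ∀ s a, Q s a = r s a + γ * ∑ s', P s a s' * V s')
    (Qnext : S → A → ℝ) (Vnext : S → ℝ)
    (hVnext : ∀ s, Vnext s = ∑ a, πnext s a * Qnext s a)
    (hQnext : ∀ s a, Qnext s a = r s a + γ * ∑ s', P s a s' * Vnext s')
    (η : ℝ) (hη : 0 < η)
    (hmin : ∀ s, πnext s ∈ simplex A ∧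
      ∀ p ∈ simplex A,
        -η * (∑ a, Q s a * πnext s a) + breg h g (πnext s) (πt s) ≤
        -η * (∑ a, Q s a * p a) + breg h g p (πt s)) :
    (∀ s a, Q s a ≤ Qnext s a) ∧
    (∀ ρ : S → ℝ, (∀ s, 0 ≤ ρ s) → ∑ s, ρ s = 1 →
      ∑ s, ρ s * V s ≤ ∑ s, ρ s * Vnext s) := by
  -- Step 1: one-step improvement at the Q-level
  have himpr : ∀ s, ∑ a, Q s a * πt s a ≤ ∑ a, Q s a * πnext s a := by
    intro s
    obtain ⟨hmem, hopt⟩ := hmin s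
    have h1 := hopt (πt s) (hπt s)
    have h2 : breg h g (πt s) (πt s) = 0 := by simp [breg]
    have h3 : 0 ≤ breg h g (πnext s) (πt s) :=
      breg_nonneg hconv.convexOn hder hmem (hπt s)
    rw [h2] at h1
    nlinarith
  have hVW : ∀ s, V s ≤ ∑ a, πnext s a * Q s a := by
    intro s
    rw [hV]
    have := himpr s
    simpa [mul_comm] using this
  -- Step 2: pointwise value improvement via contraction/max argument
  have hVle : ∀ s, V s ≤ Vnext s := by
    by_cases hS : Nonempty S
    · obtain ⟨s0, -, hs0⟩ := Finset.exists_max_image (univ : Finset S)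
        (fun s => V s - Vnext s) univ_nonempty
      set M := V s0 - Vnext s0 with hM
      have hsub : ∀ s a, Q s a - Qnext s a = γ * ∑ s', P s a s' * (V s' - Vnext s') := by
        intro s a
        rw [hQ, hQnext]
        have : ∑ s', P s a s' * (V s' - Vnext s')
            = (∑ s', P s a s' * V s') - ∑ s', P s a s' * Vnext s' := by
          rw [← Finset.sum_sub_distrib]
          exact Finset.sum_congr rfl fun s' _ => mul_sub _ _ _
        rw [this]; ring
      have hStep : M ≤ γ * M := by
        have hmem := (hmin s0).1
        calc M ≤ ∑ a, πnext s0 a * Q s0 a - Vnext s0 := by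
                have := hVW s0; simp only [hM]; linarith
          _ = ∑ a, πnext s0 a * (Q s0 a - Qnext s0 a) := by
                rw [hVnext, ← Finset.sum_sub_distrib]
                apply Finset.sum_congr rfl; intro a _; ring
          _ = γ * ∑ a, πnext s0 a * ∑ s', P s0 a s' * (V s' - Vnext s') := by
                rw [Finset.mul_sum]
                apply Finset.sum_congr rfl; intro a _; rw [hsub]; ring
          _ ≤ γ * ∑ a, πnext s0 a * ∑ s', P s0 a s' * M := by
                apply mul_le_mul_of_nonneg_left _ hγ0
                apply Finset.sum_le_sum; intro a _
                apply mul_le_mul_of_nonneg_left _ (hmem.1 a)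
                apply Finset.sum_le_sum; intro s' _
                exact mul_le_mul_of_nonneg_left (hs0 s' (mem_univ s')) (hP0 s0 a s')
          _ = γ * M := by
                have : ∀ a, πnext s0 a * ∑ s', P s0 a s' * M = πnext s0 a * M := by
                  intro a; rw [← Finset.sum_mul, hP1, one_mul]
                rw [Finset.sum_congr rfl (fun a _ => this a), ← Finset.sum_mul, hmem.2, one_mul]
      have hM0 : M ≤ 0 := by nlinarith
      intro s
      have := hs0 s (mem_univ s)
      linarith
    · intro s; exact absurd ⟨s⟩ hS
  constructor
  · intro s a
    rw [hQ, hQnext]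
    apply add_le_add (le_refl _)
    apply mul_le_mul_of_nonneg_left _ hγ0
    apply Finset.sum_le_sum; intro s' _
    exact mul_le_mul_of_nonneg_left (hVle s') (hP0 s a s')
  · intro ρ hρ0 _
    apply Finset.sum_le_sum; intro s _
    exact mul_le_mul_of_nonneg_left (hVle s) (hρ0 s)
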